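/- Let Φ be an M×N matrix and Ψ an N×N orthonormal matrix such that ΦΨ satisfies the restricted isometry property of order 2K with constant δ_{2K} < √2 - 1. If d = Ψx with x being K-sparse (at most K nonzero entries) and y = Φd, then the minimizer x̂ of ||x'||₁ subject to y = ΦΨx' satisfies x̂ = x, and hence d is exactly recovered as Ψx̂. -/

import Mathlib

set_option maxHeartbeats 1000000

open Matrix Finset

/-- x has at most K nonzero entries. -/
def KSparse {n : ℕ} (K : ℕ) (x : Fin n → ℝ) : Prop :=
  (Finset.univ.filter fun i => x i ≠ 0).card ≤ K

noncomputable def l2norm {n : ℕ} (x : Fin n → ℝ) : ℝ :=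
  Real.sqrt (∑ i, (x i) ^ 2)

noncomputable def l1norm {n : ℕ} (x : Fin n → ℝ) : ℝ :=
  ∑ i, |x i|

/-- A satisfies the restricted isometry property of order K with constant δ. -/
def RIP {m n : ℕ} (K : ℕ) (δ : ℝ) (A : Matrix (Fin m) (Fin n) ℝ) : Prop :=
  ∀ z : Fin n → ℝ, KSparse K z →
    (1 - δ) * (l2norm z) ^ 2 ≤ (l2norm (A.mulVec z)) ^ 2 ∧
    (l2norm (A.mulVec z)) ^ 2 ≤ (1 + δ) * (l2norm z) ^ 2



lemma l2norm_nonneg {n : ℕ} (x : Fin n → ℝ) : 0 ≤ l2norm x := Real.sqrt_nonneg _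

lemma l2sq {n : ℕ} (x : Fin n → ℝ) : (l2norm x) ^ 2 = ∑ i, (x i) ^ 2 := by
  rw [l2norm, Real.sq_sqrt]; positivity

/-- restriction of a vector to a finset -/
def restr {n : ℕ} (U : Finset (Fin n)) (h : Fin n → ℝ) : Fin n → ℝ :=
  fun i => if i ∈ U then h i else 0

lemma restr_sparse {n : ℕ} (U : Finset (Fin n)) (h : Fin n → ℝ) {K : ℕ} (hU : U.card ≤ K) :
    KSparse K (restr U h) := by
  refine le_trans (Finset.card_le_card ?_) hU
  intro i hi
  simp only [mem_filter, restr] at hi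
  by_contra hc
  simp [hc] at hi

lemma l2sq_restr {n : ℕ} (U : Finset (Fin n)) (h : Fin n → ℝ) :
    (l2norm (restr U h)) ^ 2 = ∑ i ∈ U, (h i) ^ 2 := by
  rw [l2sq]
  rw [← Finset.sum_filter_add_sum_filter_not Finset.univ (fun i => i ∈ U)]
  have h1 : ∑ i ∈ Finset.univ.filter (fun i => i ∈ U), (restr U h i)^2
      = ∑ i ∈ U, (h i)^2 := by
    rw [Finset.filter_mem_eq_inter, Finset.univ_inter]
    exact Finset.sum_congr rfl (fun i hi => by simp [restr, hi])
  have h2 : ∑ i ∈ Finset.univ.filter (fun i => ¬ i ∈ U), (restr U h i)^2 = 0 := by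
    refine Finset.sum_eq_zero fun i hi => ?_
    simp only [mem_filter] at hi
    simp [restr, hi.2]
  rw [h1, h2, add_zero]

lemma topK {α : Type*} [DecidableEq α] (v : α → ℝ) :
    ∀ (K : ℕ) (T : Finset α), ∃ T1 : Finset α, T1 ⊆ T ∧ T1.card = min K T.card ∧
      ∀ i ∈ T1, ∀ j ∈ T \ T1, v j ≤ v i := by
  intro K
  induction K with
  | zero => intro T; exact ⟨∅, by simp⟩
  | succ K ih =>
    intro T
    rcases T.eq_empty_or_nonempty with rfl | hT
    · exact ⟨∅, by simp⟩
    · obtain ⟨i0, hi0, hmax⟩ := T.exists_max_image v hT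
      obtain ⟨T1', hsub, hcard, hord⟩ := ih (T.erase i0)
      refine ⟨insert i0 T1', ?_, ?_, ?_⟩
      · exact Finset.insert_subset hi0 (hsub.trans (Finset.erase_subset _ _))
      · rw [Finset.card_insert_of_notMem (fun hmem => (Finset.mem_erase.mp (hsub hmem)).1 rfl),
          hcard, Finset.card_erase_of_mem hi0]
        have h1 : 1 ≤ T.card := Finset.card_pos.mpr hT
        omega
      · intro i hi j hj
        have hjT : j ∈ T := (Finset.mem_sdiff.mp hj).1
        have hjn : j ∉ insert i0 T1' := (Finset.mem_sdiff.mp hj).2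
        rcases Finset.mem_insert.mp hi with rfl | hi'
        · exact hmax j hjT
        · refine hord i hi' j (Finset.mem_sdiff.mpr ⟨Finset.mem_erase.mpr ⟨?_, hjT⟩, ?_⟩)
          · intro h; exact hjn (h ▸ Finset.mem_insert_self _ _)
          · intro h; exact hjn (Finset.mem_insert_of_mem h)

lemma partitionK {α : Type*} [DecidableEq α] (v : α → ℝ) (hv : ∀ i, 0 ≤ v i)
    (K : ℕ) (hK : 1 ≤ K) :
    ∀ T : Finset α, ∃ (n : ℕ) (B : ℕ → Finset α),
      (∀ j < n, (B j).card ≤ K) ∧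
      (∀ j1 j2, j1 < j2 → j2 < n → Disjoint (B j1) (B j2)) ∧
      (T = (Finset.range n).biUnion B) ∧
      (∀ j, j + 1 < n →
        Real.sqrt K * Real.sqrt (∑ i ∈ B (j+1), (v i)^2) ≤ ∑ i ∈ B j, v i) := by
  intro T
  induction T using Finset.strongInductionOn with
  | _ T ih =>
  rcases T.eq_empty_or_nonempty with rfl | hT
  · exact ⟨0, fun _ => ∅, by simp, by simp, by simp, by simp⟩
  obtain ⟨T1, hsub, hcard, hord⟩ := topK v K T
  have hT1ne : T1.Nonempty := by
    rw [← Finset.card_pos, hcard]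
    have := Finset.card_pos.mpr hT
    omega
  obtain ⟨n, B, hBcard, hBdisj, hBun, hBchain⟩ := ih (T \ T1) (sdiff_ssubset hsub hT1ne)
  refine ⟨n + 1, fun j => match j with | 0 => T1 | j+1 => B j, ?_, ?_, ?_, ?_⟩
  · intro j hj
    match j with
    | 0 =>
      show T1.card ≤ K
      rw [hcard]; exact min_le_left _ _
    | j+1 => exact hBcard j (by omega)
  · intro j1 j2 h12 h2n
    match j1, j2 with
    | 0, j2+1 =>
      have hBsub : B j2 ⊆ T \ T1 := hBun ▸ Finset.subset_biUnion_of_mem B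
        (Finset.mem_range.mpr (by omega))
      exact Finset.disjoint_left.mpr fun a ha hb =>
        (Finset.mem_sdiff.mp (hBsub hb)).2 ha
    | j1+1, j2+1 => exact hBdisj j1 j2 (by omega) (by omega)
  · ext a
    simp only [Finset.mem_biUnion, Finset.mem_range]
    constructor
    · intro ha
      by_cases h1 : a ∈ T1
      · exact ⟨0, by omega, h1⟩
      · have : a ∈ T \ T1 := Finset.mem_sdiff.mpr ⟨ha, h1⟩
        rw [hBun] at this
        obtain ⟨j, hj, hja⟩ := Finset.mem_biUnion.mp this
        exact ⟨j + 1, by simp at hj; omega, hja⟩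
    · rintro ⟨j, hj, hja⟩
      match j with
      | 0 => exact hsub hja
      | j+1 =>
        have hBsub : B j ⊆ T \ T1 := hBun ▸ Finset.subset_biUnion_of_mem B
          (Finset.mem_range.mpr (by omega))
        exact (Finset.mem_sdiff.mp (hBsub hja)).1
  · intro j hj
    match j with
    | 0 =>
      -- need √K √(Σ_{B 0} v²) ≤ Σ_{T1} v
      have hBsub : B 0 ⊆ T \ T1 := hBun ▸ Finset.subset_biUnion_of_mem B
        (Finset.mem_range.mpr (by omega))
      show Real.sqrt K * Real.sqrt (∑ i ∈ B 0, (v i)^2) ≤ ∑ i ∈ T1, v i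
      set S1 := ∑ i ∈ T1, v i with hS1
      have hS1nn : 0 ≤ S1 := Finset.sum_nonneg fun i _ => hv i
      rcases (B 0).eq_empty_or_nonempty with hB0 | hB0
      · rw [hB0]; simp [Real.sqrt_zero]; positivity
      -- T \ T1 nonempty, hence card T1 = K
      have hTT1 : (T \ T1).Nonempty := hB0.mono hBsub
      have hcardK : T1.card = K := by
        obtain ⟨a, ha⟩ := hTT1
        have : T1 ⊂ T := Finset.ssubset_iff_of_subset hsub |>.mpr
          ⟨a, (Finset.mem_sdiff.mp ha).1, (Finset.mem_sdiff.mp ha).2⟩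
        have := Finset.card_lt_card this
        omega
      have hkey : ∀ i ∈ B 0, (K : ℝ) * v i ≤ S1 := by
        intro i hi
        have h1 : ∀ t ∈ T1, v i ≤ v t := fun t ht => hord t ht i (hBsub hi)
        calc (K : ℝ) * v i = ∑ _t ∈ T1, v i := by
              rw [Finset.sum_const, hcardK, nsmul_eq_mul]
          _ ≤ S1 := Finset.sum_le_sum h1
      have hsq : (K : ℝ) * ∑ i ∈ B 0, (v i)^2 ≤ S1^2 := by
        have h2 : ∀ i ∈ B 0, (v i)^2 ≤ (S1/K) * v i := by
          intro i hi
          have := hkey i hi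
          have hKpos : (0:ℝ) < K := by exact_mod_cast hK
          have hvi : v i ≤ S1 / K := by rw [le_div_iff₀ hKpos]; linarith [hkey i hi]
          calc (v i)^2 = v i * v i := pow_two (v i)
            _ ≤ (S1/K) * v i := mul_le_mul_of_nonneg_right hvi (hv i)
        have h3 : ∑ i ∈ B 0, (v i)^2 ≤ (S1/K) * ∑ i ∈ B 0, v i := by
          rw [Finset.mul_sum]; exact Finset.sum_le_sum h2
        have h4 : ∑ i ∈ B 0, v i ≤ S1 := by
          calc ∑ i ∈ B 0, v i ≤ ∑ _i ∈ B 0, (S1 / K) := by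
                refine Finset.sum_le_sum fun i hi => ?_
                have hKpos : (0:ℝ) < K := by exact_mod_cast hK
                rw [le_div_iff₀ hKpos]; linarith [hkey i hi]
            _ = (B 0).card * (S1 / K) := by rw [Finset.sum_const, nsmul_eq_mul]
            _ ≤ K * (S1 / K) := by
                refine mul_le_mul_of_nonneg_right ?_ (by positivity)
                exact_mod_cast hBcard 0 (by omega)
            _ = S1 := by field_simp
        have hKpos : (0:ℝ) < K := by exact_mod_cast hK
        calc (K:ℝ) * ∑ i ∈ B 0, (v i)^2 ≤ K * ((S1/K) * ∑ i ∈ B 0, v i) :=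
              mul_le_mul_of_nonneg_left h3 hKpos.le
          _ = S1 * ∑ i ∈ B 0, v i := by field_simp
          _ ≤ S1 * S1 := mul_le_mul_of_nonneg_left h4 hS1nn
          _ = S1^2 := (sq S1).symm
      calc Real.sqrt K * Real.sqrt (∑ i ∈ B 0, (v i)^2)
          = Real.sqrt ((K:ℝ) * ∑ i ∈ B 0, (v i)^2) := (Real.sqrt_mul (by positivity) _).symm
        _ ≤ Real.sqrt (S1^2) := Real.sqrt_le_sqrt hsq
        _ = S1 := Real.sqrt_sq hS1nn
    | j+1 => exact hBchain j (by omega)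


lemma l2norm_eq_zero {n : ℕ} {x : Fin n → ℝ} (h : l2norm x = 0) : x = 0 := by
  have h2 : ∑ i, (x i)^2 = 0 := by rw [← l2sq, h]; ring
  funext i
  have := (Finset.sum_eq_zero_iff_of_nonneg (fun i _ => sq_nonneg (x i))).mp h2 i (mem_univ i)
  exact pow_eq_zero_iff (n := 2) (by norm_num) |>.mp this

lemma sparse_comb {n K : ℕ} {a b : Fin n → ℝ} (ha : KSparse K a) (hb : KSparse K b)
    (s t : ℝ) : KSparse (2*K) (s • a + t • b) := by
  unfold KSparse at *
  have hsub : (Finset.univ.filter fun i => (s • a + t • b) i ≠ 0) ⊆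
      (Finset.univ.filter fun i => a i ≠ 0) ∪ (Finset.univ.filter fun i => b i ≠ 0) := by
    intro i hi
    simp only [mem_filter, mem_union, mem_univ, true_and] at *
    by_contra hc
    push_neg at hc
    simp [Pi.add_apply, Pi.smul_apply, hc.1, hc.2] at hi
  calc (Finset.univ.filter fun i => (s • a + t • b) i ≠ 0).card
      ≤ _ := Finset.card_le_card hsub
    _ ≤ _ + _ := Finset.card_union_le _ _
    _ ≤ 2 * K := by omega

lemma cross_dot {M N K : ℕ} {δ : ℝ} {A : Matrix (Fin M) (Fin N) ℝ}
    (hA : RIP (2*K) δ A) (a b : Fin N → ℝ)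
    (ha : KSparse K a) (hb : KSparse K b) (hdisj : ∀ i, a i = 0 ∨ b i = 0)
    (hδ : 0 ≤ δ) :
    |∑ j, A.mulVec a j * A.mulVec b j| ≤ δ * l2norm a * l2norm b := by
  set D := ∑ j, A.mulVec a j * A.mulVec b j with hD
  clear_value D
  have key : ∀ t : ℝ, 0 < t → |D| ≤ δ/2 * (t^2 * (l2norm a)^2 + t⁻¹^2 * (l2norm b)^2) := by
    intro t ht
    set u := t • a with hu
    set v := t⁻¹ • b with hv
    set S := t^2 * (l2norm a)^2 + t⁻¹^2 * (l2norm b)^2 with hSdef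
    have hSnn : 0 ≤ S := by rw [hSdef]; positivity
    clear_value S
    have hS : ∀ ε : ℝ, ε^2 = 1 → (l2norm (u + ε • v))^2 = S := by
      intro ε hε2
      rw [hSdef, l2sq, l2sq, l2sq, Finset.mul_sum, Finset.mul_sum, ← Finset.sum_add_distrib]
      refine Finset.sum_congr rfl fun i _ => ?_
      simp only [Pi.add_apply, Pi.smul_apply, smul_eq_mul, hu, hv]
      rcases hdisj i with h0 | h0 <;> rw [h0]
      · have h1 : (t * 0 + ε * (t⁻¹ * b i))^2 = ε^2 * (t⁻¹^2 * (b i)^2) := by ring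
        rw [h1, hε2]; ring
      · have h1 : (t * a i + ε * (t⁻¹ * 0))^2 = t^2 * (a i)^2 := by ring
        rw [h1]; ring
    have hKs : ∀ ε : ℝ, KSparse (2*K) (u + ε • v) := by
      intro ε
      have h2 := sparse_comb ha hb t (ε * t⁻¹)
      convert h2 using 2
      rw [hv, smul_smul]
    have hAuv : ∀ ε : ℝ, A.mulVec (u + ε • v) = A.mulVec u + ε • A.mulVec v := by
      intro ε
      simp [Matrix.mulVec_add, Matrix.mulVec_smul]
    have hDuv : ∑ j, A.mulVec u j * A.mulVec v j = D := by
      rw [hD, hu, hv, Matrix.mulVec_smul, Matrix.mulVec_smul]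
      refine Finset.sum_congr rfl fun j _ => ?_
      simp only [Pi.smul_apply, smul_eq_mul]
      field_simp
    have hid : (l2norm (A.mulVec (u + (1:ℝ) • v)))^2
        - (l2norm (A.mulVec (u + (-1:ℝ) • v)))^2 = 4 * D := by
      rw [hAuv, hAuv, l2sq, l2sq, ← hDuv, ← Finset.sum_sub_distrib, Finset.mul_sum]
      refine Finset.sum_congr rfl fun j _ => ?_
      simp only [Pi.add_apply, Pi.smul_apply, smul_eq_mul]
      ring
    have h1 := hA (u + (1:ℝ) • v) (hKs 1)
    have h2 := hA (u + (-1:ℝ) • v) (hKs (-1))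
    rw [hS 1 (by norm_num)] at h1
    rw [hS (-1) (by norm_num)] at h2
    rw [abs_le]
    have hg1 : 4 * D ≤ 2 * δ * S := by
      have := h1.2
      have := h2.1
      linarith [hid]
    have hg2 : -(2 * δ * S) ≤ 4 * D := by
      have := h1.1
      have := h2.2
      linarith [hid]
    constructor <;> linarith
  set α := l2norm a with hα
  set β := l2norm b with hβ
  have hαnn : 0 ≤ α := l2norm_nonneg a
  have hβnn : 0 ≤ β := l2norm_nonneg b
  rcases eq_or_lt_of_le hαnn with hα0 | hαpos
  · have : a = 0 := l2norm_eq_zero hα0.symm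
    rw [hD, this, Matrix.mulVec_zero]
    simp only [Pi.zero_apply, zero_mul, Finset.sum_const_zero, abs_zero]
    positivity
  rcases eq_or_lt_of_le hβnn with hβ0 | hβpos
  · have : b = 0 := l2norm_eq_zero hβ0.symm
    rw [hD, this, Matrix.mulVec_zero]
    simp only [Pi.zero_apply, mul_zero, Finset.sum_const_zero, abs_zero]
    positivity
  have htpos : 0 < Real.sqrt (β/α) := Real.sqrt_pos.mpr (by positivity)
  have ht2 : (Real.sqrt (β/α))^2 = β/α := Real.sq_sqrt (by positivity)
  calc |D| ≤ δ/2 * ((Real.sqrt (β/α))^2 * α^2 + (Real.sqrt (β/α))⁻¹^2 * β^2) :=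
        key _ htpos
    _ = δ * α * β := by
        rw [inv_pow, ht2]
        field_simp
        ring

lemma l2sq_disjoint {n : ℕ} {p q : Fin n → ℝ} (h : ∀ i, p i = 0 ∨ q i = 0) :
    (l2norm (p + q))^2 = (l2norm p)^2 + (l2norm q)^2 := by
  rw [l2sq, l2sq, l2sq, ← Finset.sum_add_distrib]
  refine Finset.sum_congr rfl fun i _ => ?_
  rcases h i with h0 | h0 <;> simp [Pi.add_apply, h0]

lemma l1_le_sqrt_card {n : ℕ} (U : Finset (Fin n)) (h : Fin n → ℝ) :
    ∑ i ∈ U, |h i| ≤ Real.sqrt U.card * l2norm (restr U h) := by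
  have hcs : (∑ i ∈ U, |h i|)^2 ≤ U.card * ∑ i ∈ U, (h i)^2 := by
    have := sq_sum_le_card_mul_sum_sq (s := U) (f := fun i => |h i|)
    simpa [sq_abs] using this
  have h1 : ∑ i ∈ U, |h i| ≤ Real.sqrt ((U.card : ℝ) * ∑ i ∈ U, (h i)^2) := by
    rw [← Real.sqrt_sq (Finset.sum_nonneg fun i _ => abs_nonneg (h i))]
    exact Real.sqrt_le_sqrt hcs
  rw [Real.sqrt_mul (by positivity)] at h1
  rwa [← l2sq_restr U h, Real.sqrt_sq (l2norm_nonneg _)] at h1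
lemma sqrt2_lt_two : Real.sqrt 2 < 2 := by
  nlinarith [Real.sq_sqrt (show (0:ℝ) ≤ 2 by norm_num), Real.sqrt_nonneg 2]

lemma kernel_zero {M N K : ℕ} {δ : ℝ} {A : Matrix (Fin M) (Fin N) ℝ}
    (hA : RIP (2*K) δ A) (hδpos : 0 ≤ δ) (hδ : δ < Real.sqrt 2 - 1) (hK : 1 ≤ K)
    (h : Fin N → ℝ) (hker : A.mulVec h = 0)
    (T0 : Finset (Fin N)) (hT0 : T0.card ≤ K)
    (hcone : ∑ i ∈ T0ᶜ, |h i| ≤ ∑ i ∈ T0, |h i|) : h = 0 := by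
  have hδ1 : δ < 1 := by nlinarith [sqrt2_lt_two]
  have hAh2 : (l2norm (A.mulVec h))^2 = 0 := by
    rw [hker, l2sq]; simp
  obtain ⟨n, B, hBcard, hBdisj, hBun, hBchain⟩ :=
    partitionK (fun i => |h i|) (fun i => abs_nonneg (h i)) K hK T0ᶜ
  rcases Nat.eq_zero_or_pos n with rfl | hn
  · -- T0ᶜ = ∅, so h is K-sparse and in the kernel
    simp only [Finset.range_zero, Finset.biUnion_empty] at hBun
    have hKs : KSparse (2*K) h := by
      unfold KSparse
      have hsub : (Finset.univ.filter fun i => h i ≠ 0) ⊆ T0 := by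
        intro i _
        by_contra hc
        have : i ∈ T0ᶜ := Finset.mem_compl.mpr hc
        rw [hBun] at this
        exact absurd this (Finset.notMem_empty i)
      calc _ ≤ T0.card := Finset.card_le_card hsub
        _ ≤ K := hT0
        _ ≤ 2*K := by omega
    have := (hA h hKs).1
    rw [hAh2] at this
    have hnu : l2norm h = 0 := by
      by_contra hc
      have hpos : 0 < l2norm h ^ 2 := by positivity
      nlinarith [mul_pos (show (0:ℝ) < 1 - δ by linarith) hpos]
    exact l2norm_eq_zero hnu
  -- main case : n ≥ 1
  have hBsub : ∀ j, j < n → B j ⊆ T0ᶜ := fun j hj =>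
    hBun ▸ Finset.subset_biUnion_of_mem B (Finset.mem_range.mpr hj)
  set a := restr T0 h with ha
  set b := restr (B 0) h with hb
  set u := a + b with hu
  set F : ℕ → Fin N → ℝ := fun j => restr (B j) h with hF
  have hbF : b = F 0 := rfl
  clear_value F
  clear_value u
  clear_value b
  clear_value a
  -- disjointness facts
  have hdT0 : ∀ j, j < n → ∀ i, a i = 0 ∨ F j i = 0 := by
    intro j hj i
    by_cases hi : i ∈ T0
    · right
      have : i ∉ B j := fun hBj => (Finset.mem_compl.mp (hBsub j hj hBj)) hi
      simp [hF, restr, this]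
    · left; simp [ha, restr, hi]
  have hdB : ∀ j1 j2, j1 < j2 → j2 < n → ∀ i, F j1 i = 0 ∨ F j2 i = 0 := by
    intro j1 j2 h12 h2n i
    by_cases hi : i ∈ B j1
    · right
      have : i ∉ B j2 := Finset.disjoint_left.mp (hBdisj j1 j2 h12 h2n) hi
      simp [hF, restr, this]
    · left; simp [hF, restr, hi]
  -- sparsity facts
  have hsa : KSparse K a := by rw [ha]; exact restr_sparse T0 h hT0
  have hsF : ∀ j, j < n → KSparse K (F j) := fun j hj => by
    rw [hF]; exact restr_sparse (B j) h (hBcard j hj)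
  have hsu : KSparse (2*K) u := by
    have := sparse_comb hsa (hsF 0 hn) 1 1
    simpa [hu, hb, hF] using this
  -- decomposition
  have hdecomp : h = a + ∑ j ∈ Finset.range n, F j := by
    funext i
    simp only [Pi.add_apply, Finset.sum_apply]
    by_cases hi : i ∈ T0
    · have hz : ∀ j ∈ Finset.range n, F j i = 0 := by
        intro j hj
        have : i ∉ B j := fun hBj =>
          (Finset.mem_compl.mp (hBsub j (Finset.mem_range.mp hj) hBj)) hi
        simp [hF, restr, this]
      rw [Finset.sum_eq_zero hz]
      simp [ha, restr, hi]
    · have hic : i ∈ T0ᶜ := Finset.mem_compl.mpr hi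
      rw [hBun] at hic
      obtain ⟨j0, hj0, hij0⟩ := Finset.mem_biUnion.mp hic
      have hsum : ∑ j ∈ Finset.range n, F j i = h i := by
        rw [Finset.sum_eq_single j0]
        · simp [hF, restr, hij0]
        · intro j hj hne
          have : i ∉ B j := by
            rcases lt_or_gt_of_ne hne with hlt | hgt
            · exact fun hh => Finset.disjoint_left.mp
                (hBdisj j j0 hlt (Finset.mem_range.mp hj0)) hh hij0
            · exact fun hh => Finset.disjoint_left.mp
                (hBdisj j0 j hgt (Finset.mem_range.mp hj)) hij0 hh
          simp [hF, restr, this]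
        · intro hj0'; exact absurd hj0 hj0'
      rw [hsum]
      simp [ha, restr, hi]
  -- mulVec of sums
  have hmapsum : ∀ s : Finset ℕ, A.mulVec (∑ j ∈ s, F j) = ∑ j ∈ s, A.mulVec (F j) := by
    intro s
    funext k
    simp only [Matrix.mulVec, dotProduct, Finset.sum_apply, Finset.mul_sum]
    exact Finset.sum_comm
  have hAu : A.mulVec u = - ∑ j ∈ Finset.Ico 1 n, A.mulVec (F j) := by
    rw [eq_neg_iff_add_eq_zero]
    have e0 : A.mulVec h = A.mulVec u + ∑ j ∈ Finset.Ico 1 n, A.mulVec (F j) := by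
      rw [hdecomp, Matrix.mulVec_add, hmapsum, Finset.range_eq_Ico,
        Finset.sum_eq_sum_Ico_succ_bot hn, hu, Matrix.mulVec_add, hbF]
      abel
    rw [← e0, hker]
  -- norm notation
  set na := l2norm a with hna
  set nb := l2norm b with hnb
  set nu := l2norm u with hnu
  set Sig := ∑ j ∈ Finset.Ico 1 n, l2norm (F j) with hSig
  clear_value na nb nu Sig
  have hnann : 0 ≤ na := by rw [hna]; exact l2norm_nonneg a
  have hnbnn : 0 ≤ nb := by rw [hnb]; exact l2norm_nonneg b
  have hnunn : 0 ≤ nu := by rw [hnu]; exact l2norm_nonneg u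
  have hSignn : 0 ≤ Sig := by
    rw [hSig]; exact Finset.sum_nonneg fun j _ => l2norm_nonneg (F j)
  have husq : nu^2 = na^2 + nb^2 := by
    rw [hnu, hna, hnb, hu, hbF]
    exact l2sq_disjoint (hdT0 0 hn)
  have hab : na + nb ≤ Real.sqrt 2 * nu := by
    have h1 : (na+nb)^2 ≤ 2 * nu^2 := by nlinarith [sq_nonneg (na - nb)]
    calc na + nb = Real.sqrt ((na+nb)^2) := (Real.sqrt_sq (by positivity)).symm
      _ ≤ Real.sqrt (2 * nu^2) := Real.sqrt_le_sqrt h1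
      _ = Real.sqrt 2 * nu := by
          rw [Real.sqrt_mul (by norm_num), Real.sqrt_sq hnunn]
  have hna_u : na ≤ nu := by nlinarith [sq_nonneg nb]
  -- expansion of the energy
  have hexp : (l2norm (A.mulVec u))^2 = ∑ j ∈ Finset.Ico 1 n,
      (-(∑ k, A.mulVec a k * A.mulVec (F j) k) + -(∑ k, A.mulVec b k * A.mulVec (F j) k)) := by
    rw [l2sq]
    have hu' : ∀ k, A.mulVec u k = A.mulVec a k + A.mulVec b k := fun k => by
      rw [hu, Matrix.mulVec_add]; rfl
    calc ∑ k, (A.mulVec u k)^2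
        = ∑ k, A.mulVec u k * A.mulVec u k := by
          refine Finset.sum_congr rfl fun k _ => pow_two _
      _ = ∑ k, A.mulVec u k * ((- ∑ j ∈ Finset.Ico 1 n, A.mulVec (F j)) k) := by
          rw [← hAu]
      _ = ∑ k, ∑ j ∈ Finset.Ico 1 n, -(A.mulVec u k * A.mulVec (F j) k) := by
          refine Finset.sum_congr rfl fun k _ => ?_
          simp only [Pi.neg_apply, Finset.sum_apply, mul_neg, Finset.mul_sum,
            ← Finset.sum_neg_distrib]
      _ = ∑ j ∈ Finset.Ico 1 n, ∑ k, -(A.mulVec u k * A.mulVec (F j) k) := Finset.sum_comm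
      _ = _ := by
          refine Finset.sum_congr rfl fun j _ => ?_
          have hk : ∀ k, -(A.mulVec u k * A.mulVec (F j) k)
              = -(A.mulVec a k * A.mulVec (F j) k) + -(A.mulVec b k * A.mulVec (F j) k) := by
            intro k; rw [hu' k]; ring
          rw [Finset.sum_congr rfl (fun k _ => hk k), Finset.sum_add_distrib,
            Finset.sum_neg_distrib, Finset.sum_neg_distrib]
  -- upper bound on energy
  have hup : (l2norm (A.mulVec u))^2 ≤ δ * (na + nb) * Sig := by
    rw [hexp]
    have hbd : ∀ j ∈ Finset.Ico 1 n,
        (-(∑ k, A.mulVec a k * A.mulVec (F j) k) + -(∑ k, A.mulVec b k * A.mulVec (F j) k))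
          ≤ δ * na * l2norm (F j) + δ * nb * l2norm (F j) := by
      intro j hj
      obtain ⟨hj1, hjn⟩ := Finset.mem_Ico.mp hj
      have c1 := cross_dot hA a (F j) hsa (hsF j hjn) (hdT0 j hjn) hδpos
      have c2 := cross_dot hA b (F j) (by rw [hbF]; exact hsF 0 hn) (hsF j hjn)
        (by rw [hbF]; exact hdB 0 j hj1 hjn) hδpos
      rw [← hna] at c1
      rw [← hnb] at c2
      have d1 := neg_abs_le (∑ k, A.mulVec a k * A.mulVec (F j) k)
      have d2 := neg_abs_le (∑ k, A.mulVec b k * A.mulVec (F j) k)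
      linarith
    calc _ ≤ ∑ j ∈ Finset.Ico 1 n, (δ * na * l2norm (F j) + δ * nb * l2norm (F j)) :=
          Finset.sum_le_sum hbd
      _ = δ * (na + nb) * Sig := by
          rw [Finset.sum_add_distrib, ← Finset.mul_sum, ← Finset.mul_sum, hSig]
          ring
  -- Sig ≤ na
  have hKpos : (0:ℝ) < Real.sqrt K := Real.sqrt_pos.mpr (by exact_mod_cast hK)
  have hsig : Sig ≤ na := by
    have hs1 : Real.sqrt K * Sig ≤ ∑ i ∈ T0ᶜ, |h i| := by
      rw [hSig, Finset.mul_sum]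
      have hper : ∀ j ∈ Finset.Ico 1 n,
          Real.sqrt K * l2norm (F j) ≤ ∑ i ∈ B (j-1), |h i| := by
        intro j hj
        obtain ⟨hj1, hjn⟩ := Finset.mem_Ico.mp hj
        have hchain := hBchain (j-1) (by omega)
        have hje : j - 1 + 1 = j := by omega
        rw [hje] at hchain
        have hl2 : l2norm (F j) = Real.sqrt (∑ i ∈ B j, (h i)^2) := by
          simp only [hF]
          rw [← l2sq_restr (B j) h, Real.sqrt_sq (l2norm_nonneg _)]
        rw [hl2]
        simpa [sq_abs] using hchain
      calc ∑ j ∈ Finset.Ico 1 n, Real.sqrt K * l2norm (F j)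
          ≤ ∑ j ∈ Finset.Ico 1 n, ∑ i ∈ B (j-1), |h i| := Finset.sum_le_sum hper
        _ = ∑ j ∈ Finset.range (n-1), ∑ i ∈ B j, |h i| := by
            rw [Finset.sum_Ico_eq_sum_range]
            refine Finset.sum_congr rfl fun j _ => ?_
            have hje : 1 + j - 1 = j := by omega
            rw [hje]
        _ ≤ ∑ j ∈ Finset.range n, ∑ i ∈ B j, |h i| := by
            refine Finset.sum_le_sum_of_subset_of_nonneg
              (Finset.range_subset_range.mpr (Nat.sub_le n 1)) ?_
            intro j _ _
            exact Finset.sum_nonneg fun i _ => abs_nonneg (h i)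
        _ = ∑ i ∈ T0ᶜ, |h i| := by
            rw [hBun]
            rw [Finset.sum_biUnion]
            intro j1 hj1 j2 hj2 hne
            simp only [Finset.coe_range, Set.mem_Iio] at hj1 hj2
            rcases lt_or_gt_of_ne hne with hlt | hgt
            · exact hBdisj j1 j2 hlt hj2
            · exact (hBdisj j2 j1 hgt hj1).symm
    have hs3 : ∑ i ∈ T0, |h i| ≤ Real.sqrt T0.card * na := by
      rw [hna, ha]
      exact l1_le_sqrt_card T0 h
    have hs4 : Real.sqrt T0.card ≤ Real.sqrt K := Real.sqrt_le_sqrt (by exact_mod_cast hT0)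
    have hs5 : Real.sqrt K * Sig ≤ Real.sqrt K * na := by
      calc Real.sqrt K * Sig ≤ ∑ i ∈ T0ᶜ, |h i| := hs1
        _ ≤ ∑ i ∈ T0, |h i| := hcone
        _ ≤ Real.sqrt T0.card * na := hs3
        _ ≤ Real.sqrt K * na := mul_le_mul_of_nonneg_right hs4 hnann
    exact le_of_mul_le_mul_left hs5 hKpos
  -- combine
  have hlow := (hA u hsu).1
  rw [← hnu] at hlow
  have hfin : (1 - δ) * nu^2 ≤ Real.sqrt 2 * δ * nu^2 := by
    have h1 : (l2norm (A.mulVec u))^2 ≤ δ * (na + nb) * na := by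
      calc (l2norm (A.mulVec u))^2 ≤ δ * (na + nb) * Sig := hup
        _ ≤ δ * (na + nb) * na := by
            refine mul_le_mul_of_nonneg_left hsig (by positivity)
    have h2 : δ * (na + nb) * na ≤ Real.sqrt 2 * δ * nu^2 := by
      have h3 : (na + nb) * na ≤ (Real.sqrt 2 * nu) * nu :=
        mul_le_mul hab hna_u hnann (by positivity)
      calc δ * (na + nb) * na = δ * ((na + nb) * na) := by ring
        _ ≤ δ * ((Real.sqrt 2 * nu) * nu) := mul_le_mul_of_nonneg_left h3 hδpos
        _ = Real.sqrt 2 * δ * nu^2 := by ring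
    linarith
  have hcoef : Real.sqrt 2 * δ < 1 - δ := by
    nlinarith [Real.sq_sqrt (show (0:ℝ) ≤ 2 by norm_num),
      mul_pos (show (0:ℝ) < Real.sqrt 2 + 1 by positivity)
        (show (0:ℝ) < Real.sqrt 2 - 1 - δ by linarith)]
  have hnu0 : nu = 0 := by
    by_contra hc
    have hpos : 0 < nu^2 := by positivity
    nlinarith [mul_pos (show (0:ℝ) < (1 - δ) - Real.sqrt 2 * δ by linarith) hpos]
  have hu0 : u = 0 := l2norm_eq_zero (by rw [← hnu]; exact hnu0)
  have hT0z : ∀ i ∈ T0, h i = 0 := by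
    intro i hi
    have hui := congrFun hu0 i
    have hbi : b i = 0 := by
      have : i ∉ B 0 := fun hBj => (Finset.mem_compl.mp (hBsub 0 hn hBj)) hi
      simp [hb, restr, this]
    have hai : a i = h i := by simp [ha, restr, hi]
    simpa [hu, Pi.add_apply, hai, hbi] using hui
  have hsum0 : ∑ i ∈ T0ᶜ, |h i| ≤ 0 := by
    calc ∑ i ∈ T0ᶜ, |h i| ≤ ∑ i ∈ T0, |h i| := hcone
      _ = 0 := Finset.sum_eq_zero fun i hi => by rw [hT0z i hi, abs_zero]
  have hczero : ∀ i ∈ T0ᶜ, h i = 0 := by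
    intro i hi
    have := (Finset.sum_eq_zero_iff_of_nonneg (fun i _ => abs_nonneg (h i))).mp
      (le_antisymm hsum0 (Finset.sum_nonneg fun i _ => abs_nonneg (h i))) i hi
    exact abs_eq_zero.mp this
  funext i
  by_cases hi : i ∈ T0
  · exact hT0z i hi
  · exact hczero i (Finset.mem_compl.mpr hi)


/-- Exact recovery of a K-sparse representation by ℓ₁ minimization under RIP of
order 2K with δ_{2K} < √2 - 1. -/
theorem stmt_7 {M N K : ℕ} (Φ : Matrix (Fin M) (Fin N) ℝ) (Ψ : Matrix (Fin N) (Fin N) ℝ)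
    (hΨ : Ψᵀ * Ψ = 1) (δ : ℝ) (hδpos : 0 ≤ δ) (hδ : δ < Real.sqrt 2 - 1)
    (hRIP : RIP (2 * K) δ (Φ * Ψ))
    (x d y xh : _) (hx : KSparse K x) (hd : d = Ψ.mulVec x) (hy : y = Φ.mulVec d)
    (hfeas : y = (Φ * Ψ).mulVec xh)
    (hmin : ∀ x' : Fin N → ℝ, y = (Φ * Ψ).mulVec x' → l1norm xh ≤ l1norm x') :
    xh = x ∧ Ψ.mulVec xh = d := by
  have hfx : y = (Φ * Ψ).mulVec x := by
    rw [hy, hd, Matrix.mulVec_mulVec]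
  have hAh : (Φ * Ψ).mulVec (xh - x) = 0 := by
    rw [Matrix.mulVec_sub, ← hfeas, ← hfx, sub_self]
  have hle : l1norm xh ≤ l1norm x := hmin x hfx
  have hmain : xh = x := by
    rcases Nat.eq_zero_or_pos K with hK0 | hK
    · -- K = 0 : x = 0 and xh = 0
      have hx0 : x = 0 := by
        have hfe : (Finset.univ.filter fun i => x i ≠ 0) = ∅ :=
          Finset.card_eq_zero.mp (Nat.le_zero.mp (hK0 ▸ hx))
        funext i
        by_contra hc
        have : i ∈ (Finset.univ.filter fun i => x i ≠ 0) :=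
          Finset.mem_filter.mpr ⟨Finset.mem_univ i, hc⟩
        rw [hfe] at this
        exact absurd this (Finset.notMem_empty i)
      have hl1x : l1norm x = 0 := by
        rw [hx0, l1norm]; simp
      have hxh0 : xh = 0 := by
        have h0 : l1norm xh ≤ 0 := hl1x ▸ hle
        have h1 : ∑ i, |xh i| = 0 :=
          le_antisymm h0 (Finset.sum_nonneg fun i _ => abs_nonneg (xh i))
        funext i
        exact abs_eq_zero.mp ((Finset.sum_eq_zero_iff_of_nonneg
          (fun i _ => abs_nonneg (xh i))).mp h1 i (Finset.mem_univ i))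
      rw [hxh0, hx0]
    · -- K ≥ 1 : use the kernel lemma
      set T0 := Finset.univ.filter (fun i => x i ≠ 0) with hT0
      have hxc : ∀ i ∈ T0ᶜ, x i = 0 := by
        intro i hi
        have := Finset.mem_compl.mp hi
        by_contra hc
        exact this (Finset.mem_filter.mpr ⟨Finset.mem_univ i, hc⟩)
      have hcone : ∑ i ∈ T0ᶜ, |(xh - x) i| ≤ ∑ i ∈ T0, |(xh - x) i| := by
        have e1 : l1norm xh = ∑ i ∈ T0, |x i + (xh - x) i| + ∑ i ∈ T0ᶜ, |(xh - x) i| := by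
          rw [l1norm, ← Finset.sum_add_sum_compl T0 (fun i => |xh i|)]
          congr 1
          · refine Finset.sum_congr rfl fun i _ => ?_
            congr 1
            simp [Pi.sub_apply]
          · refine Finset.sum_congr rfl fun i hi => ?_
            congr 1
            simp [Pi.sub_apply, hxc i hi]
        have e2 : l1norm x = ∑ i ∈ T0, |x i| := by
          rw [l1norm, ← Finset.sum_add_sum_compl T0 (fun i => |x i|)]
          rw [Finset.sum_congr rfl (fun i hi => by rw [hxc i hi, abs_zero] :
            ∀ i ∈ T0ᶜ, |x i| = 0)]
          simp
        have e3 : ∑ i ∈ T0, |x i| - ∑ i ∈ T0, |(xh - x) i| ≤ ∑ i ∈ T0, |x i + (xh - x) i| := by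
          rw [← Finset.sum_sub_distrib]
          refine Finset.sum_le_sum fun i _ => ?_
          have := abs_sub_abs_le_abs_sub (x i) (-(xh - x) i)
          simp only [abs_neg, sub_neg_eq_add] at this
          exact this
        linarith
      have hzero : xh - x = 0 :=
        kernel_zero hRIP hδpos hδ hK (xh - x) hAh T0 hx hcone
      exact sub_eq_zero.mp hzero
  exact ⟨hmain, by rw [hmain, hd]⟩
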